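/- Let $K$ be a field whose characteristic is $0$ or greater than $n$, and let $A, B \in M_n(K)$ satisfy $A^2 - 2AB + B^2 = 0$. Then $A$ and $B$ are simultaneously triangularizable over the algebraic closure $\overline{K}$, i.e. there exists $P \in GL_n(\overline{K})$ such that $P^{-1}AP$ and $P^{-1}BP$ are both upper triangular. -/

import Mathlib

open Polynomial Matrix Finset

section aux

variable {F : Type*} [Field F]

theorem pow_mul_eq' {n : ℕ} (B D : Matrix (Fin n) (Fin n) F) (hcomm : D * B = B * D + D * D) (k : ℕ) :
    D ^ k * B = (B + (k : F) • D) * D ^ k := by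
  induction k with
  | zero => simp
  | succ k ih =>
    have h1 : D ^ (k+1) * B = D * (D ^ k * B) := by rw [pow_succ', mul_assoc]
    have h2 : D * (B + (k : F) • D) = (B + ((k:F)+1) • D) * D := by
      rw [mul_add, hcomm, add_mul, add_smul, one_smul, add_mul]
      rw [mul_smul_comm, smul_mul_assoc]
      abel
    rw [h1, ih, ← mul_assoc, h2, pow_succ]
    push_cast
    rw [mul_assoc, ← pow_succ, ← pow_succ']

theorem det_D_eq_zero' {n : ℕ} (hn : 0 < n) (hc : ∀ k : ℕ, 0 < k → k ≤ n → (k : F) ≠ 0)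
    (B D : Matrix (Fin n) (Fin n) F) (hcomm : D * B = B * D + D * D) : D.det = 0 := by
  classical
  by_contra hdet
  have hdetk : ∀ k : ℕ, (B + (k:F) • D).det = B.det := by
    intro k
    have h := congrArg Matrix.det (pow_mul_eq' B D hcomm k)
    rw [Matrix.det_mul, Matrix.det_mul, Matrix.det_pow] at h
    have hD : D.det ^ k ≠ 0 := pow_ne_zero _ hdet
    rw [mul_comm (D.det ^ k) B.det] at h
    exact (mul_right_cancel₀ hD h).symm
  set M : Matrix (Fin n) (Fin n) F[X] := B.map Polynomial.C + (X : F[X]) • D.map Polynomial.C with hM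
  have hMapply : ∀ i j, M i j = Polynomial.C (B i j) + X * Polynomial.C (D i j) := by
    intro i j
    simp only [hM, Matrix.add_apply, Matrix.smul_apply, Matrix.map_apply, smul_eq_mul]
  have heval : ∀ t : F, M.det.eval t = (B + t • D).det := by
    intro t
    have h1 := (Polynomial.evalRingHom t).map_det M
    simp only [coe_evalRingHom] at h1
    rw [h1]
    congr 1
    ext i j
    simp only [RingHom.mapMatrix_apply, Matrix.map_apply, hMapply, Matrix.add_apply,
      Matrix.smul_apply, smul_eq_mul, coe_evalRingHom, eval_add, eval_C, eval_mul, eval_X]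
  have hdegE : ∀ (σ : Equiv.Perm (Fin n)) (i : Fin n), (M (σ i) i).natDegree ≤ 1 := by
    intro σ i
    rw [hMapply]
    refine le_trans (natDegree_add_le _ _) ?_
    simp only [natDegree_C, max_le_iff]
    exact ⟨Nat.zero_le _, le_trans (natDegree_mul_le) (by simp)⟩
  have hCsgn : ∀ σ : Equiv.Perm (Fin n),
      ((Equiv.Perm.sign σ : ℤ) : F[X]) = Polynomial.C ((Equiv.Perm.sign σ : ℤ) : F) := by
    intro σ; simp
  have hdeg : M.det.natDegree ≤ n := by
    rw [Matrix.det_apply']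
    refine natDegree_sum_le_of_forall_le _ _ (fun σ _ => ?_)
    rw [hCsgn]
    refine le_trans (natDegree_C_mul_le _ _) ?_
    refine le_trans (natDegree_prod_le _ _) ?_
    calc ∑ i : Fin n, (M (σ i) i).natDegree ≤ ∑ _i : Fin n, 1 :=
          Finset.sum_le_sum (fun i _ => hdegE σ i)
      _ = n := by simp
  have hcoeff : M.det.coeff n = D.det := by
    rw [Matrix.det_apply', Polynomial.finset_sum_coeff, Matrix.det_apply']
    refine Finset.sum_congr rfl (fun σ _ => ?_)
    rw [hCsgn, Polynomial.coeff_C_mul]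
    congr 1
    have h2 := Polynomial.coeff_prod_of_natDegree_le (s := Finset.univ) (fun i => M (σ i) i) 1
      (fun i _ => hdegE σ i)
    simp only [Finset.card_univ, Fintype.card_fin, mul_one] at h2
    rw [h2]
    refine Finset.prod_congr rfl (fun i _ => ?_)
    rw [hMapply, Polynomial.coeff_add, Polynomial.coeff_C]
    have h3 : (X * Polynomial.C (D (σ i) i)).coeff 1 = D (σ i) i := by
      rw [show (1:ℕ) = 0 + 1 from rfl, Polynomial.coeff_X_mul, Polynomial.coeff_C_zero]
    rw [h3]
    simp
  set q : F[X] := M.det - Polynomial.C B.det with hq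
  have hqne : q ≠ 0 := by
    intro h0
    have h1 : q.coeff n = 0 := by rw [h0]; simp
    rw [hq, Polynomial.coeff_sub, hcoeff, Polynomial.coeff_C, if_neg hn.ne', sub_zero] at h1
    exact hdet h1
  have hqdeg : q.natDegree ≤ n := le_trans (natDegree_sub_le _ _) (by simp [hdeg])
  have hroots : ((Finset.range (n+1)).image (fun k : ℕ => (k : F))) ⊆ q.roots.toFinset := by
    intro x hx
    simp only [Finset.mem_image, Finset.mem_range] at hx
    obtain ⟨k, hk, rfl⟩ := hx
    rw [Multiset.mem_toFinset, Polynomial.mem_roots hqne]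
    rw [Polynomial.IsRoot, Polynomial.eval_sub, heval, Polynomial.eval_C, hdetk, sub_self]
  have hinj : Set.InjOn (fun k : ℕ => (k : F)) (Finset.range (n+1)) := by
    intro i hi j hj hij
    have hij' : (i : F) = (j : F) := hij
    simp only [Finset.coe_range, Set.mem_Iio] at hi hj
    by_contra hne
    rcases Nat.lt_or_ge i j with hlt | hge
    · refine hc (j - i) (Nat.sub_pos_of_lt hlt) (by omega) ?_
      push_cast [Nat.cast_sub hlt.le]
      rw [hij']; ring
    · have hlt : j < i := by omega
      refine hc (i - j) (Nat.sub_pos_of_lt hlt) (by omega) ?_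
      push_cast [Nat.cast_sub hlt.le]
      rw [hij']; ring
  have hcard : n + 1 ≤ q.roots.toFinset.card := by
    calc n + 1 = ((Finset.range (n+1)).image (fun k : ℕ => (k : F))).card := by
          rw [Finset.card_image_of_injOn hinj, Finset.card_range]
      _ ≤ q.roots.toFinset.card := Finset.card_le_card hroots
  have hfin : q.roots.toFinset.card ≤ n :=
    le_trans (Multiset.toFinset_card_le _) (le_trans (Polynomial.card_roots' q) hqdeg)
  omega

theorem exists_common_eigen [IsAlgClosed F] {n : ℕ} (hn : 0 < n)
    (hc : ∀ k : ℕ, 0 < k → k ≤ n → (k : F) ≠ 0)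
    (A B : Matrix (Fin n) (Fin n) F) (h : A * A - 2 * (A * B) + B * B = 0) :
    ∃ (v : Fin n → F) (μ : F), v ≠ 0 ∧ A.mulVec v = μ • v ∧ B.mulVec v = μ • v := by
  set D : Matrix (Fin n) (Fin n) F := A - B with hD
  have hcomm : D * B = B * D + D * D := by
    have : D * B - B * D - D * D = -(A * A - 2 * (A * B) + B * B) + (A - B) * (A - B) - (D * D) := by
      rw [hD]; noncomm_ring
    rw [h, hD] at this
    have h2 : D * B - B * D - D * D = 0 := by rw [this]; noncomm_ring
    have := sub_eq_zero.mp (by rw [← h2]; noncomm_ring : D * B - (B * D + D * D) = 0)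
    exact this
  have hdet : D.det = 0 := det_D_eq_zero' hn hc B D hcomm
  obtain ⟨v₀, hv₀ne, hv₀⟩ := (Matrix.exists_mulVec_eq_zero_iff).mpr hdet
  set W : Submodule F (Fin n → F) := LinearMap.ker D.mulVecLin with hW
  have hBW : ∀ x ∈ W, B.mulVecLin x ∈ W := by
    intro x hx
    rw [hW, LinearMap.mem_ker] at hx ⊢
    simp only [Matrix.mulVecLin_apply] at hx ⊢
    rw [Matrix.mulVec_mulVec, hcomm, Matrix.add_mulVec, ← Matrix.mulVec_mulVec,
      ← Matrix.mulVec_mulVec, hx, Matrix.mulVec_zero, Matrix.mulVec_zero, add_zero]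
  have : Nontrivial W := nontrivial_of_ne ⟨v₀, by rw [hW, LinearMap.mem_ker, mulVecLin_apply]; exact hv₀⟩ 0
    (by simp [Subtype.ext_iff, hv₀ne])
  set g : W →ₗ[F] W := (B.mulVecLin).restrict hBW with hg
  obtain ⟨μ, hμ⟩ := Module.End.exists_eigenvalue g
  obtain ⟨w, hw⟩ := hμ.exists_hasEigenvector
  have hBw : B.mulVec (w : Fin n → F) = μ • (w : Fin n → F) := by
    have h2 := congrArg (Subtype.val : W → (Fin n → F)) hw.apply_eq_smul
    rw [hg, LinearMap.restrict_coe_apply] at h2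
    simp only [Matrix.mulVecLin_apply, SetLike.val_smul] at h2
    exact h2
  refine ⟨(w : Fin n → F), μ, ?_, ?_, hBw⟩
  · exact fun hcontra => hw.right (Subtype.ext hcontra)
  · have hDw : D.mulVec (w : Fin n → F) = 0 := by
      have h3 := w.2
      simp only [hW, LinearMap.mem_ker, Matrix.mulVecLin_apply] at h3
      exact h3
    have hA : A = B + D := by rw [hD]; abel
    rw [hA, Matrix.add_mulVec, hBw, hDw, add_zero]

theorem exists_Q {m : ℕ} (v : Fin (m+1) → F) (hv : v ≠ 0) :
    ∃ Q Q' : Matrix (Fin (m+1)) (Fin (m+1)) F,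
      Q' * Q = 1 ∧ Q * Q' = 1 ∧ ∀ i, Q i 0 = v i := by
  classical
  have hs : LinearIndepOn F id ({v} : Set (Fin (m+1) → F)) :=
    LinearIndepOn.singleton hv
  set b := Module.Basis.extend hs with hb
  have hmem : v ∈ hs.extend (Set.subset_univ _) := hs.subset_extend _ rfl
  set e : _ ≃ Fin (m+1) := b.indexEquiv (Pi.basisFun F (Fin (m+1))) with he
  set e' := e.trans (Equiv.swap (e ⟨v, hmem⟩) 0) with he'
  set c := b.reindex e' with hcdef
  have hc0 : c 0 = v := by
    rw [hcdef, Module.Basis.reindex_apply, he']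
    have : (e.trans (Equiv.swap (e ⟨v, hmem⟩) 0)).symm 0 = ⟨v, hmem⟩ := by
      rw [Equiv.symm_apply_eq]
      simp [Equiv.swap_apply_right]
    rw [this, hb, Module.Basis.extend_apply_self]
  set Q := (Pi.basisFun F (Fin (m+1))).toMatrix c with hQdef
  have : Invertible Q := (Pi.basisFun F (Fin (m+1))).invertibleToMatrix c
  refine ⟨Q, ⅟Q, invOf_mul_self Q, mul_invOf_self Q, fun i => ?_⟩
  rw [hQdef, Module.Basis.toMatrix_apply, hc0, Pi.basisFun_repr]

/-- drop first row and column -/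
def sub1 {R : Type*} {n : ℕ} (X : Matrix (Fin (n+1)) (Fin (n+1)) R) : Matrix (Fin n) (Fin n) R :=
  X.submatrix Fin.succ Fin.succ

/-- embed an n×n matrix as lower-right block with 1 in the corner -/
def emb {R : Type*} [Zero R] [One R] {n : ℕ} (P : Matrix (Fin n) (Fin n) R) :
    Matrix (Fin (n+1)) (Fin (n+1)) R :=
  Matrix.of fun i j =>
    Fin.cases (Fin.cases 1 (fun _ => 0) j) (fun i' => Fin.cases 0 (fun j' => P i' j') j) i

section emb
variable {R : Type*} {n : ℕ}

@[simp] lemma emb_zero_zero [Zero R] [One R] (P : Matrix (Fin n) (Fin n) R) :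
    emb P 0 0 = 1 := rfl
@[simp] lemma emb_zero_succ [Zero R] [One R] (P : Matrix (Fin n) (Fin n) R) (j : Fin n) :
    emb P 0 j.succ = 0 := by simp [emb]
@[simp] lemma emb_succ_zero [Zero R] [One R] (P : Matrix (Fin n) (Fin n) R) (i : Fin n) :
    emb P i.succ 0 = 0 := by simp [emb]
@[simp] lemma emb_succ_succ [Zero R] [One R] (P : Matrix (Fin n) (Fin n) R) (i j : Fin n) :
    emb P i.succ j.succ = P i j := by simp [emb]

lemma emb_mul [NonAssocSemiring R] (P Q : Matrix (Fin n) (Fin n) R) :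
    emb P * emb Q = emb (P * Q) := by
  ext i j
  rw [Matrix.mul_apply]
  refine Fin.cases ?_ (fun i' => ?_) i <;> refine Fin.cases ?_ (fun j' => ?_) j <;>
    rw [Fin.sum_univ_succ] <;> simp [Matrix.mul_apply]

lemma emb_one [NonAssocSemiring R] : emb (1 : Matrix (Fin n) (Fin n) R) = 1 := by
  ext i j
  refine Fin.cases ?_ (fun i' => ?_) i <;> refine Fin.cases ?_ (fun j' => ?_) j <;>
    simp [Matrix.one_apply, Fin.succ_ne_zero, (Fin.succ_ne_zero _).symm, Fin.succ_inj]

lemma sub1_mul [NonAssocSemiring R] (X Y : Matrix (Fin (n+1)) (Fin (n+1)) R)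
    (hX : ∀ i : Fin n, X i.succ 0 = 0) : sub1 (X * Y) = sub1 X * sub1 Y := by
  ext i j
  simp only [sub1, Matrix.submatrix_apply, Matrix.mul_apply]
  rw [Fin.sum_univ_succ, hX i, zero_mul, zero_add]

@[simp] lemma sub1_emb [Zero R] [One R] (P : Matrix (Fin n) (Fin n) R) : sub1 (emb P) = P := by
  ext i j; simp [sub1]

end emb

section more
variable {R : Type*} {n : ℕ}

@[simp] lemma sub1_add [Add R] (X Y : Matrix (Fin (n+1)) (Fin (n+1)) R) :
    sub1 (X + Y) = sub1 X + sub1 Y := by ext i j; rfl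
@[simp] lemma sub1_sub [Sub R] (X Y : Matrix (Fin (n+1)) (Fin (n+1)) R) :
    sub1 (X - Y) = sub1 X - sub1 Y := by ext i j; rfl
@[simp] lemma sub1_zero [Zero R] : sub1 (0 : Matrix (Fin (n+1)) (Fin (n+1)) R) = 0 := by
  ext i j; rfl

lemma tri_step [CommRing R] (A₁ : Matrix (Fin (n+1)) (Fin (n+1)) R)
    (hA₁ : ∀ i : Fin n, A₁ i.succ 0 = 0)
    (P₂ P₂' : Matrix (Fin n) (Fin n) R)
    (hT : (P₂' * sub1 A₁ * P₂).BlockTriangular id) :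
    (emb P₂' * A₁ * emb P₂).BlockTriangular id := by
  have hcol : ∀ i : Fin n, (emb P₂' * A₁) i.succ 0 = 0 := by
    intro i
    rw [Matrix.mul_apply, Fin.sum_univ_succ]
    simp [hA₁]
  have hcol2 : ∀ i : Fin n, (emb P₂' * A₁ * emb P₂) i.succ 0 = 0 := by
    intro i
    rw [Matrix.mul_apply, Fin.sum_univ_succ]
    simp [hcol i]
  have hsub : sub1 (emb P₂' * A₁ * emb P₂) = P₂' * sub1 A₁ * P₂ := by
    rw [sub1_mul _ _ hcol, sub1_mul _ _ (fun i => emb_succ_zero P₂' i), sub1_emb, sub1_emb]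
  intro i j hij
  induction i using Fin.cases with
  | zero => exact absurd hij (by simp)
  | succ i' =>
    induction j using Fin.cases with
    | zero => exact hcol2 i'
    | succ j' =>
      have : (emb P₂' * A₁ * emb P₂) i'.succ j'.succ = (P₂' * sub1 A₁ * P₂) i' j' := by
        rw [← hsub]; rfl
      rw [this]
      exact hT (by simpa [Fin.succ_lt_succ_iff] using hij)
end more

theorem key_triangularize [IsAlgClosed F] :
    ∀ (n : ℕ), (∀ k : ℕ, 0 < k → k ≤ n → (k : F) ≠ 0) →
    ∀ A B : Matrix (Fin n) (Fin n) F, A * A - 2 * (A * B) + B * B = 0 →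
    ∃ P P' : Matrix (Fin n) (Fin n) F, P' * P = 1 ∧ P * P' = 1 ∧
      (P' * A * P).BlockTriangular id ∧ (P' * B * P).BlockTriangular id := by
  intro n
  induction n with
  | zero =>
    intro _ A B _
    exact ⟨1, 1, by simp, by simp, by intro i j h; exact i.elim0, by intro i j h; exact i.elim0⟩
  | succ m ih =>
    intro hc A B h
    obtain ⟨v, μ, hv, hAv, hBv⟩ := exists_common_eigen (Nat.succ_pos m) hc A B h
    obtain ⟨Q, Q', hQ'Q, hQQ', hQcol⟩ := exists_Q v hv
    have hmid : ∀ X Y : Matrix (Fin (m+1)) (Fin (m+1)) F,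
        (Q' * X * Q) * (Q' * Y * Q) = Q' * (X * Y) * Q := by
      intro X Y
      calc (Q' * X * Q) * (Q' * Y * Q) = Q' * X * (Q * Q') * (Y * Q) := by
            simp only [mul_assoc]
        _ = Q' * (X * Y) * Q := by rw [hQQ']; simp only [mul_one, mul_assoc]
    have h₁ : (Q'*A*Q)*(Q'*A*Q) - ((Q'*A*Q)*(Q'*B*Q) + (Q'*A*Q)*(Q'*B*Q)) + (Q'*B*Q)*(Q'*B*Q)
        = 0 := by
      rw [hmid, hmid, hmid]
      have hrw : Q' * (A*A) * Q - (Q' * (A*B) * Q + Q' * (A*B) * Q) + Q' * (B*B) * Q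
          = Q' * ((A*A - 2*(A*B) + B*B) * Q) := by noncomm_ring
      rw [hrw, h, zero_mul, mul_zero]
    -- column facts
    set e₀ : Fin (m+1) → F := Pi.single (0 : Fin (m+1)) (1:F) with he₀
    have hQe : Q.mulVec e₀ = v := by
      ext i; rw [he₀, Matrix.mulVec_single]; simp [hQcol]
    have hQ'v : Q'.mulVec v = e₀ := by
      rw [← hQe, Matrix.mulVec_mulVec, hQ'Q, Matrix.one_mulVec]
    have hcolfact : ∀ (X : Matrix (Fin (m+1)) (Fin (m+1)) F),
        X.mulVec v = μ • v → ∀ i : Fin m, (Q' * X * Q) i.succ 0 = 0 := by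
      intro X hX i
      have he : (Q' * X * Q).mulVec e₀ = μ • e₀ := by
        rw [← Matrix.mulVec_mulVec, ← Matrix.mulVec_mulVec, hQe, hX, Matrix.mulVec_smul, hQ'v]
      have h5 := congrFun he i.succ
      rw [he₀, Matrix.mulVec_single] at h5
      simpa [Pi.single_eq_of_ne (Fin.succ_ne_zero i)] using h5
    have hA₁0 : ∀ i : Fin m, (Q' * A * Q) i.succ 0 = 0 := hcolfact A hAv
    have hB₁0 : ∀ i : Fin m, (Q' * B * Q) i.succ 0 = 0 := hcolfact B hBv
    -- relation for submatrices
    set A₂ := sub1 (Q' * A * Q) with hA₂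
    set B₂ := sub1 (Q' * B * Q) with hB₂
    have h₂ : A₂ * A₂ - 2 * (A₂ * B₂) + B₂ * B₂ = 0 := by
      have hs := congrArg sub1 h₁
      rw [sub1_add, sub1_sub, sub1_add, sub1_zero, sub1_mul _ _ hA₁0, sub1_mul _ _ hA₁0,
        sub1_mul _ _ hB₁0] at hs
      rw [two_mul, hA₂, hB₂]
      exact hs
    obtain ⟨P₂, P₂', hP'P, hPP', hTA, hTB⟩ :=
      ih (fun k hk hkm => hc k hk (le_trans hkm (Nat.le_succ m))) A₂ B₂ h₂
    refine ⟨Q * emb P₂, emb P₂' * Q', ?_, ?_, ?_, ?_⟩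
    · rw [mul_assoc, ← mul_assoc Q', hQ'Q, one_mul, emb_mul, hP'P, emb_one]
    · rw [mul_assoc, ← mul_assoc (emb P₂), emb_mul, hPP', emb_one, one_mul, hQQ']
    · have hre : (emb P₂' * Q') * A * (Q * emb P₂) = emb P₂' * (Q' * A * Q) * emb P₂ := by
        simp only [mul_assoc]
      rw [hre]
      exact tri_step _ hA₁0 _ _ hTA
    · have hre : (emb P₂' * Q') * B * (Q * emb P₂) = emb P₂' * (Q' * B * Q) * emb P₂ := by
        simp only [mul_assoc]
      rw [hre]
      exact tri_step _ hB₁0 _ _ hTB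

end aux

/-- If `K` is a field of characteristic `0` or greater than `n` and
`A, B ∈ Mₙ(K)` satisfy `A² - 2AB + B² = 0`, then `A` and `B` are simultaneously
triangularizable over the algebraic closure of `K`. -/
theorem stmt0 (n : ℕ) (K : Type*) [Field K]
    (hchar : ringChar K = 0 ∨ n < ringChar K)
    (A B : Matrix (Fin n) (Fin n) K)
    (h : A ^ 2 - 2 * (A * B) + B ^ 2 = 0) :
    ∃ P : GL (Fin n) (AlgebraicClosure K),
      (((P⁻¹ : GL (Fin n) (AlgebraicClosure K)) : Matrix (Fin n) (Fin n) (AlgebraicClosure K)) *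
          A.map (algebraMap K (AlgebraicClosure K)) *
          (P : Matrix (Fin n) (Fin n) (AlgebraicClosure K))).BlockTriangular id ∧
      (((P⁻¹ : GL (Fin n) (AlgebraicClosure K)) : Matrix (Fin n) (Fin n) (AlgebraicClosure K)) *
          B.map (algebraMap K (AlgebraicClosure K)) *
          (P : Matrix (Fin n) (Fin n) (AlgebraicClosure K))).BlockTriangular id := by
  have hc : ∀ k : ℕ, 0 < k → k ≤ n → (k : AlgebraicClosure K) ≠ 0 := by
    intro k hk hkn hk0
    have h1 : algebraMap K (AlgebraicClosure K) (k : K) = algebraMap K (AlgebraicClosure K) 0 := by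
      rw [map_natCast, map_zero, hk0]
    have h2 : (k : K) = 0 := (algebraMap K (AlgebraicClosure K)).injective h1
    have h3 : ringChar K ∣ k := (ringChar.spec K k).mp h2
    rcases hchar with h0 | hgt
    · rw [h0] at h3
      exact absurd (zero_dvd_iff.mp h3) hk.ne'
    · have := Nat.le_of_dvd hk h3
      omega
  have h' : A * A - 2 * (A * B) + B * B = 0 := by
    rw [← h, pow_two, pow_two]
  have hmap : (A.map (algebraMap K (AlgebraicClosure K))) * (A.map (algebraMap K (AlgebraicClosure K)))
      - 2 * ((A.map (algebraMap K (AlgebraicClosure K))) * (B.map (algebraMap K (AlgebraicClosure K))))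
      + (B.map (algebraMap K (AlgebraicClosure K))) * (B.map (algebraMap K (AlgebraicClosure K))) = 0 := by
    have := congrArg (RingHom.mapMatrix (algebraMap K (AlgebraicClosure K))
      (m := Fin n)) h'
    simpa only [map_sub, map_add, _root_.map_mul, map_ofNat, map_zero, RingHom.mapMatrix_apply] using this
  obtain ⟨P, P', h1, h2, hA, hB⟩ := key_triangularize n hc _ _ hmap
  exact ⟨⟨P, P', h2, h1⟩, hA, hB⟩
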